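/- Let E, J, R ∈ ℂ^{n×n} with E ≥ 0, J = −J*, R = [[R11,0],[0,0]] with R11 > 0 of size n1, partitioned conformally with n1 + n2 = n. Then the pair (E, J − R) is regular and asymptotically stable (all finite eigenvalues s with det(sE − (J−R)) = 0 satisfy Re(s) < 0) if and only if for all purely imaginary s ∈ ℂ (Re(s) = 0), rank([J12 − sE12; J22 − sE22]) = n2. -/

import Mathlib

open Matrix
open scoped ComplexOrder


lemma aux_rank_iff {m : Type*} [Fintype m] {k : ℕ} (A : Matrix m (Fin k) ℂ) :
    A.rank = k ↔ ∀ v : Fin k → ℂ, A *ᵥ v = 0 → v = 0 := by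
  rw [← Matrix.ker_mulVecLin_eq_bot_iff]
  have h := LinearMap.finrank_range_add_finrank_ker A.mulVecLin
  rw [Module.finrank_fin_fun] at h
  rw [Matrix.rank]
  constructor
  · intro hr
    have : Module.finrank ℂ (LinearMap.ker A.mulVecLin) = 0 := by omega
    exact Submodule.finrank_eq_zero.mp this
  · intro hk
    rw [hk] at h
    simpa using h
lemma conj_dot {p : Type*} [Fintype p] (A : Matrix p p ℂ) (x : p → ℂ) :
    star (star x ⬝ᵥ A *ᵥ x) = star x ⬝ᵥ Aᴴ *ᵥ x := by
  rw [Matrix.star_dotProduct, star_star, Matrix.star_mulVec, Matrix.dotProduct_mulVec]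

lemma aux_key {n1 n2 : ℕ}
    (E11 J11 R11 : Matrix (Fin n1) (Fin n1) ℂ)
    (E12 J12 : Matrix (Fin n1) (Fin n2) ℂ)
    (E22 J22 : Matrix (Fin n2) (Fin n2) ℂ)
    (hE : (Matrix.fromBlocks E11 E12 E12ᴴ E22).PosSemidef)
    (hJ : (Matrix.fromBlocks J11 J12 (-J12ᴴ) J22)ᴴ = -(Matrix.fromBlocks J11 J12 (-J12ᴴ) J22))
    (hR11 : R11.PosDef) (s : ℂ) (hs : 0 ≤ s.re) (x : Fin n1 ⊕ Fin n2 → ℂ) (hxne : x ≠ 0)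
    (hMx : (s • Matrix.fromBlocks E11 E12 E12ᴴ E22 -
          (Matrix.fromBlocks J11 J12 (-J12ᴴ) J22 -
            Matrix.fromBlocks R11 0 0 (0 : Matrix (Fin n2) (Fin n2) ℂ))) *ᵥ x = 0) :
    ∃ t : ℂ, t.re = 0 ∧ ∃ v : Fin n2 → ℂ, v ≠ 0 ∧
      (J12 - t • E12) *ᵥ v = 0 ∧ (J22 - t • E22) *ᵥ v = 0 := by
  have hsplit : x = Sum.elim (x ∘ Sum.inl) (x ∘ Sum.inr) := (Sum.elim_comp_inl_inr x).symm
  set x1 : Fin n1 → ℂ := x ∘ Sum.inl with hx1def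
  set x2 : Fin n2 → ℂ := x ∘ Sum.inr with hx2def
  -- the scalar equation
  have hdot : s * (star x ⬝ᵥ (Matrix.fromBlocks E11 E12 E12ᴴ E22 *ᵥ x))
      - (star x ⬝ᵥ (Matrix.fromBlocks J11 J12 (-J12ᴴ) J22 *ᵥ x))
      + star x ⬝ᵥ (Matrix.fromBlocks R11 0 0 (0 : Matrix (Fin n2) (Fin n2) ℂ) *ᵥ x) = 0 := by
    have h0 : star x ⬝ᵥ ((s • Matrix.fromBlocks E11 E12 E12ᴴ E22 -
          (Matrix.fromBlocks J11 J12 (-J12ᴴ) J22 -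
            Matrix.fromBlocks R11 0 0 (0 : Matrix (Fin n2) (Fin n2) ℂ))) *ᵥ x) = 0 := by
      rw [hMx, dotProduct_zero]
    rw [Matrix.sub_mulVec, Matrix.sub_mulVec, Matrix.smul_mulVec,
      dotProduct_sub, dotProduct_sub, dotProduct_smul,
      smul_eq_mul] at h0
    linear_combination h0
  have he : (0 : ℂ) ≤ star x ⬝ᵥ (Matrix.fromBlocks E11 E12 E12ᴴ E22 *ᵥ x) := hE.dotProduct_mulVec_nonneg x
  have hjskew : star (star x ⬝ᵥ (Matrix.fromBlocks J11 J12 (-J12ᴴ) J22 *ᵥ x))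
      = -(star x ⬝ᵥ (Matrix.fromBlocks J11 J12 (-J12ᴴ) J22 *ᵥ x)) := by
    rw [conj_dot, hJ, Matrix.neg_mulVec, dotProduct_neg]
  have hjre : (star x ⬝ᵥ (Matrix.fromBlocks J11 J12 (-J12ᴴ) J22 *ᵥ x)).re = 0 := by
    have := congrArg Complex.re hjskew
    simp only [Complex.star_def, Complex.conj_re, Complex.neg_re] at this
    linarith
  have hreq : star x ⬝ᵥ (Matrix.fromBlocks R11 0 0 (0 : Matrix (Fin n2) (Fin n2) ℂ) *ᵥ x)
      = star x1 ⬝ᵥ (R11 *ᵥ x1) := by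
    conv_lhs => rw [hsplit]
    simp [Matrix.fromBlocks_mulVec, Function.star_sumElim, sumElim_dotProduct_sumElim]
  have hrnn : (0 : ℂ) ≤ star x1 ⬝ᵥ (R11 *ᵥ x1) := hR11.posSemidef.dotProduct_mulVec_nonneg x1
  rw [Complex.le_def] at he hrnn
  simp only [Complex.zero_re, Complex.zero_im] at he hrnn
  have hre := congrArg Complex.re hdot
  rw [hreq] at hre
  simp only [Complex.add_re, Complex.sub_re, Complex.mul_re, Complex.zero_re] at hre
  rw [← he.2, hjre] at hre
  -- hre : s.re * e.re - s.im * 0 - 0 + r.re = 0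
  have hmul : 0 ≤ s.re * (star x ⬝ᵥ (Matrix.fromBlocks E11 E12 E12ᴴ E22 *ᵥ x)).re :=
    mul_nonneg hs he.1
  have hr_re : (star x1 ⬝ᵥ (R11 *ᵥ x1)).re = 0 := by linarith
  have hse : s.re * (star x ⬝ᵥ (Matrix.fromBlocks E11 E12 E12ᴴ E22 *ᵥ x)).re = 0 := by linarith
  have hr0 : star x1 ⬝ᵥ (R11 *ᵥ x1) = 0 := Complex.ext hr_re (by rw [← hrnn.2]; simp)
  have hx1 : x1 = 0 := by
    by_contra h
    exact (hR11.dotProduct_mulVec_pos h).ne' hr0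
  have hxe : x = Sum.elim (0 : Fin n1 → ℂ) x2 := by conv_lhs => rw [hsplit, hx1]
  have hx2ne : x2 ≠ 0 := by
    intro h
    apply hxne
    rw [hxe, h]
    funext i
    cases i <;> rfl
  rw [hxe] at hMx
  have htop : ∀ i, (J12 *ᵥ x2) i = s * (E12 *ᵥ x2) i := by
    intro i
    have := congrFun hMx (Sum.inl i)
    simp [Matrix.sub_mulVec, Matrix.smul_mulVec, Matrix.fromBlocks_mulVec,
      Matrix.mulVec_zero, Matrix.zero_mulVec] at this
    linear_combination -this
  have hbot : ∀ i, (J22 *ᵥ x2) i = s * (E22 *ᵥ x2) i := by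
    intro i
    have := congrFun hMx (Sum.inr i)
    simp [Matrix.sub_mulVec, Matrix.smul_mulVec, Matrix.fromBlocks_mulVec,
      Matrix.mulVec_zero, Matrix.zero_mulVec] at this
    linear_combination -this
  rcases hs.eq_or_lt with h0 | hpos
  · refine ⟨s, h0.symm, x2, hx2ne, ?_, ?_⟩ <;> funext i <;>
      simp only [Matrix.sub_mulVec, Matrix.smul_mulVec, Pi.sub_apply, Pi.smul_apply,
        smul_eq_mul, Pi.zero_apply]
    · linear_combination htop i
    · linear_combination hbot i
  · have he_re : (star x ⬝ᵥ (Matrix.fromBlocks E11 E12 E12ᴴ E22 *ᵥ x)).re = 0 := by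
      rcases mul_eq_zero.mp hse with h | h
      · linarith
      · exact h
    have he0 : star x ⬝ᵥ (Matrix.fromBlocks E11 E12 E12ᴴ E22 *ᵥ x) = 0 :=
      Complex.ext he_re (by rw [← he.2]; simp)
    have hEx : Matrix.fromBlocks E11 E12 E12ᴴ E22 *ᵥ x = 0 :=
      (hE.dotProduct_mulVec_zero_iff x).mp he0
    rw [hxe] at hEx
    have hE12 : ∀ i, (E12 *ᵥ x2) i = 0 := fun i => by
      have := congrFun hEx (Sum.inl i)
      simpa [Matrix.fromBlocks_mulVec, Matrix.mulVec_zero] using this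
    have hE22 : ∀ i, (E22 *ᵥ x2) i = 0 := fun i => by
      have := congrFun hEx (Sum.inr i)
      simpa [Matrix.fromBlocks_mulVec, Matrix.mulVec_zero] using this
    refine ⟨0, by simp, x2, hx2ne, ?_, ?_⟩ <;> funext i <;>
      simp only [zero_smul, sub_zero, Pi.zero_apply]
    · rw [htop i, hE12 i, mul_zero]
    · rw [hbot i, hE22 i, mul_zero]

/-- Chu–Mehrmann Lemma 3.3(ii): the pair (E, J − R) is regular and asymptotically stable iff
for all purely imaginary s, [J12 − sE12; J22 − sE22] has full column rank n2. -/
theorem stmt_2 {n1 n2 : ℕ}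
    (E11 J11 R11 : Matrix (Fin n1) (Fin n1) ℂ)
    (E12 J12 : Matrix (Fin n1) (Fin n2) ℂ)
    (E22 J22 : Matrix (Fin n2) (Fin n2) ℂ)
    (hE : (Matrix.fromBlocks E11 E12 E12ᴴ E22).PosSemidef)
    (hJ : (Matrix.fromBlocks J11 J12 (-J12ᴴ) J22)ᴴ = -(Matrix.fromBlocks J11 J12 (-J12ᴴ) J22))
    (hR11 : R11.PosDef) :
    ((∃ s : ℂ, (s • Matrix.fromBlocks E11 E12 E12ᴴ E22 -
          (Matrix.fromBlocks J11 J12 (-J12ᴴ) J22 -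
            Matrix.fromBlocks R11 0 0 (0 : Matrix (Fin n2) (Fin n2) ℂ))).det ≠ 0) ∧
      (∀ s : ℂ, (s • Matrix.fromBlocks E11 E12 E12ᴴ E22 -
          (Matrix.fromBlocks J11 J12 (-J12ᴴ) J22 -
            Matrix.fromBlocks R11 0 0 (0 : Matrix (Fin n2) (Fin n2) ℂ))).det = 0 → s.re < 0))
    ↔ (∀ s : ℂ, s.re = 0 →
        (Matrix.fromRows (J12 - s • E12) (J22 - s • E22)).rank = n2) := by
  constructor
  · rintro ⟨-, hstab⟩ s hs
    rw [aux_rank_iff]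
    intro v hv
    by_contra hvne
    rw [Matrix.fromRows_mulVec] at hv
    have hv1 : (J12 - s • E12) *ᵥ v = 0 := by
      funext i; simpa using congrFun hv (Sum.inl i)
    have hv2 : (J22 - s • E22) *ᵥ v = 0 := by
      funext i; simpa using congrFun hv (Sum.inr i)
    have hMx : (s • Matrix.fromBlocks E11 E12 E12ᴴ E22 -
          (Matrix.fromBlocks J11 J12 (-J12ᴴ) J22 -
            Matrix.fromBlocks R11 0 0 (0 : Matrix (Fin n2) (Fin n2) ℂ))) *ᵥ
          Sum.elim (0 : Fin n1 → ℂ) v = 0 := by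
      funext i
      cases i with
      | inl i =>
        have := congrFun hv1 i
        simp only [Matrix.sub_mulVec, Matrix.smul_mulVec, Pi.sub_apply, Pi.smul_apply,
          smul_eq_mul, Pi.zero_apply] at this ⊢
        simp only [Matrix.fromBlocks_mulVec, Sum.elim_comp_inl, Sum.elim_comp_inr,
          Matrix.mulVec_zero, Matrix.zero_mulVec, Matrix.neg_mulVec,
          Sum.elim_inl, zero_add, add_zero, neg_zero, Pi.add_apply, Pi.zero_apply, Pi.neg_apply]
        linear_combination -this
      | inr i =>
        have := congrFun hv2 i
        simp only [Matrix.sub_mulVec, Matrix.smul_mulVec, Pi.sub_apply, Pi.smul_apply,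
          smul_eq_mul, Pi.zero_apply] at this ⊢
        simp only [Matrix.fromBlocks_mulVec, Sum.elim_comp_inl, Sum.elim_comp_inr,
          Matrix.mulVec_zero, Matrix.zero_mulVec, Matrix.neg_mulVec,
          Sum.elim_inr, zero_add, add_zero, neg_zero, Pi.add_apply, Pi.zero_apply, Pi.neg_apply]
        linear_combination -this
    have hne : Sum.elim (0 : Fin n1 → ℂ) v ≠ 0 := by
      intro h
      apply hvne
      funext i
      exact congrFun h (Sum.inr i)
    have hdet := Matrix.exists_mulVec_eq_zero_iff.mp ⟨Sum.elim (0 : Fin n1 → ℂ) v, hne, hMx⟩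
    have := hstab s hdet
    rw [hs] at this
    exact lt_irrefl 0 this
  · intro hrk
    have hstab : ∀ s : ℂ, (s • Matrix.fromBlocks E11 E12 E12ᴴ E22 -
          (Matrix.fromBlocks J11 J12 (-J12ᴴ) J22 -
            Matrix.fromBlocks R11 0 0 (0 : Matrix (Fin n2) (Fin n2) ℂ))).det = 0 → s.re < 0 := by
      intro s hdet
      by_contra hlt
      push_neg at hlt
      obtain ⟨x, hxne, hMx⟩ := Matrix.exists_mulVec_eq_zero_iff.mpr hdet
      obtain ⟨t, ht, v, hvne, h1, h2⟩ :=
        aux_key E11 J11 R11 E12 J12 E22 J22 hE hJ hR11 s hlt x hxne hMx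
      apply hvne
      refine (aux_rank_iff _).mp (hrk t ht) v ?_
      rw [Matrix.fromRows_mulVec, h1, h2]
      funext i
      cases i <;> rfl
    refine ⟨⟨1, fun hdet => ?_⟩, hstab⟩
    have := hstab 1 hdet
    rw [Complex.one_re] at this
    linarith
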